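/- Let ‖·‖ be a norm on ℝ^d such that w ↦ (1/2)‖w‖² is ν-strongly convex with respect to ‖·‖ (ν > 0), let W ⊆ ℝ^d be a nonempty closed convex set, let f : ℝ^d → ℝ be ρ-weakly convex with respect to ‖·‖ (ρ > 0), set β = 2ρ/ν, and let w ∈ W. If ŵ ∈ W minimizes v ↦ f(v) + (β/2)‖v − w‖² over W, then f(w) ≥ f(ŵ) + (β/2)‖ŵ − w‖² + (ρ/2)‖ŵ − w‖². -/

import Mathlib

open Set

/-- `Nm` is a norm on `ℝ^d`. -/
def IsNorm {d : ℕ} (Nm : EuclideanSpace ℝ (Fin d) → ℝ) : Prop :=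
  (∀ x, Nm x = 0 ↔ x = 0) ∧ (∀ (a : ℝ) (x), Nm (a • x) = |a| * Nm x) ∧
    ∀ x y, Nm (x + y) ≤ Nm x + Nm y

/-- `f` is `ρ`-weakly convex on `W` w.r.t. the norm `Nm`. -/
def WeaklyConvexOn {d : ℕ} (Nm : EuclideanSpace ℝ (Fin d) → ℝ) (ρ : ℝ)
    (W : Set (EuclideanSpace ℝ (Fin d))) (f : EuclideanSpace ℝ (Fin d) → ℝ) : Prop :=
  ∀ w ∈ W, ∀ v ∈ W, ∀ l : ℝ, 0 ≤ l → l ≤ 1 →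
    f (l • w + (1 - l) • v) ≤ l * f w + (1 - l) * f v + ρ * l * (1 - l) / 2 * Nm (w - v) ^ 2

/-- `f` is `lam`-strongly convex on `W` w.r.t. the norm `Nm`. -/
def StronglyConvexOnNorm {d : ℕ} (Nm : EuclideanSpace ℝ (Fin d) → ℝ) (lam : ℝ)
    (W : Set (EuclideanSpace ℝ (Fin d))) (f : EuclideanSpace ℝ (Fin d) → ℝ) : Prop :=
  ∀ w ∈ W, ∀ v ∈ W, ∀ t : ℝ, 0 ≤ t → t ≤ 1 →
    f (t • w + (1 - t) • v) ≤ t * f w + (1 - t) * f v - lam * t * (1 - t) / 2 * Nm (w - v) ^ 2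

/-- If `(1/2)‖·‖²` is `ν`-strongly convex, `f` is `ρ`-weakly convex, `β = 2ρ/ν`, `w ∈ W`,
and `ŵ` minimizes `v ↦ f(v) + (β/2)‖v − w‖²` over `W`, then
`f(w) ≥ f(ŵ) + (β/2)‖ŵ − w‖² + (ρ/2)‖ŵ − w‖²`. -/
theorem stmt_16 (d : ℕ) (Nm : EuclideanSpace ℝ (Fin d) → ℝ) (hNm : IsNorm Nm)
    (ν ρ : ℝ) (hν : 0 < ν) (hρ : 0 < ρ)
    (hsc : StronglyConvexOnNorm Nm ν univ (fun w => 1 / 2 * Nm w ^ 2))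
    (W : Set (EuclideanSpace ℝ (Fin d))) (hWne : W.Nonempty) (hWclosed : IsClosed W)
    (hWconv : Convex ℝ W)
    (f : EuclideanSpace ℝ (Fin d) → ℝ) (hf : WeaklyConvexOn Nm ρ univ f)
    (w : EuclideanSpace ℝ (Fin d)) (hw : w ∈ W)
    (what : EuclideanSpace ℝ (Fin d)) (hwhat : what ∈ W)
    (hmin : ∀ v ∈ W, f what + (2 * ρ / ν) / 2 * Nm (what - w) ^ 2
      ≤ f v + (2 * ρ / ν) / 2 * Nm (v - w) ^ 2) :
    f w ≥ f what + (2 * ρ / ν) / 2 * Nm (what - w) ^ 2 + ρ / 2 * Nm (what - w) ^ 2 := by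
  set β := 2 * ρ / ν with hβ
  set S := Nm (what - w) ^ 2 with hSdef
  have hS0 : 0 ≤ S := sq_nonneg _
  have hneg : ∀ x, Nm (-x) = Nm x := by
    intro x
    have := hNm.2.1 (-1) x
    simpa using this
  have hNm0 : Nm 0 = 0 := (hNm.1 0).mpr rfl
  have hβν : β * ν = 2 * ρ := by
    rw [hβ]
    field_simp
  -- key inequality for each t ∈ (0,1]
  have key : ∀ t : ℝ, 0 < t → t ≤ 1 →
      f what + β / 2 * S + ρ * (1 - t) / 2 * S ≤ f w := by
    intro t ht0 ht1
    set z := t • w + (1 - t) • what with hz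
    have hzW : z ∈ W := hWconv hw hwhat ht0.le (by linarith) (by ring)
    -- weak convexity of f
    have hf1 := hf w (mem_univ _) what (mem_univ _) t ht0.le ht1
    -- strong convexity of (1/2)‖·‖² at points (w - w) and (what - w)
    have hsc1 := hsc (w - w) (mem_univ _) (what - w) (mem_univ _) t ht0.le ht1
    have hcomb : t • (w - w) + (1 - t) • (what - w) = z - w := by
      simp only [hz]
      module
    have hdiff : (w - w) - (what - w) = -(what - w) := by abel
    rw [hcomb, hdiff, hneg] at hsc1
    simp only [sub_self, hNm0] at hsc1
    -- Nm (w - what) = Nm (what - w)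
    have hsym : Nm (w - what) ^ 2 = S := by
      rw [hSdef, ← hneg (what - w)]
      congr 1
      abel
    rw [hsym] at hf1
    -- minimality at z
    have hmz := hmin z hzW
    -- from hsc1 : 1/2 * Nm (z - w)^2 ≤ t * (1/2 * 0^2) + (1-t) * (1/2 * S) - ν*t*(1-t)/2 * S
    have hNzw : β / 2 * Nm (z - w) ^ 2 ≤
        (1 - t) * (β / 2) * S - β * ν * t * (1 - t) / 2 * S := by
      have hβpos : 0 < β := by positivity
      rw [← hSdef] at hsc1
      nlinarith [mul_le_mul_of_nonneg_left hsc1 hβpos.le]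
    have hgz : f what + β / 2 * S ≤
        t * f w + (1 - t) * f what + ρ * t * (1 - t) / 2 * S +
          ((1 - t) * (β / 2) * S - β * ν * t * (1 - t) / 2 * S) := by
      calc f what + β / 2 * S ≤ f z + β / 2 * Nm (z - w) ^ 2 := hmz
        _ ≤ t * f w + (1 - t) * f what + ρ * t * (1 - t) / 2 * S +
            ((1 - t) * (β / 2) * S - β * ν * t * (1 - t) / 2 * S) := by
            linarith [hf1, hNzw]
    -- simplify using βν = 2ρ and divide by t
    rw [hβν] at hgz
    have ht : t * (f what + β / 2 * S + ρ * (1 - t) / 2 * S) ≤ t * f w := by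
      nlinarith [hgz]
    exact le_of_mul_le_mul_left (by linarith [ht]) ht0
  -- take t → 0 via ε-argument
  rw [ge_iff_le]
  refine le_of_forall_pos_le_add ?_
  intro ε hε
  set t : ℝ := min 1 (ε / (ρ * S / 2 + ε)) with htdef
  have hden : 0 < ρ * S / 2 + ε := by positivity
  have ht0 : 0 < t := lt_min one_pos (by positivity)
  have ht1 : t ≤ 1 := min_le_left _ _
  have hk := key t ht0 ht1
  have htle : t ≤ ε / (ρ * S / 2 + ε) := min_le_right _ _
  have hsmall : ρ * t / 2 * S ≤ ε := by
    have h1 : t * (ρ * S / 2 + ε) ≤ ε := (le_div_iff₀ hden).mp htle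
    nlinarith [mul_nonneg ht0.le hε.le]
  linarith [hk]
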